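/- Let G be an undirected graph and H the digraph obtained by: taking V(G) as vertices, and for each edge v_i v_j of G with i < j, adding a new vertex x_{ij} together with arcs (v_i, x_{ij}), (x_{ij}, v_j) and (v_i, v_j). Then G has a vertex cover of size at most k if and only if H has a set X of at most k vertices such that H - X has no transitive arcs. -/

import Mathlib

/-- An arc `(x, y)` is a *transitive arc* if there is a directed path from `x` to `y`
avoiding the arc `(x, y)` itself. -/
def IsTransArc {V : Type*} (A : V → V → Prop) (x y : V) : Prop :=
  A x y ∧ ∃ l : List V, l.Nodup ∧
    l.Chain' (fun a b => A a b ∧ ¬(a = x ∧ b = y)) ∧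
    l.head? = some x ∧ l.getLast? = some y

/-- The arc relation of the digraph obtained by deleting the vertex set `X`. -/
def Del {V : Type*} (A : V → V → Prop) (X : Set V) (a b : V) : Prop :=
  a ∉ X ∧ b ∉ X ∧ A a b

/-- The vertex set of the digraph `H` built from `G`: the original vertices together
with one subdivision vertex `x_{ij}` for every edge `v_i v_j` (`i < j`) of `G`. -/
def HVert (n : ℕ) (G : SimpleGraph (Fin n)) : Type :=
  Fin n ⊕ {p : Fin n × Fin n // p.1 < p.2 ∧ G.Adj p.1 p.2}

/-- The arcs of `H`: for each edge `v_i v_j` of `G` with `i < j`, the arcs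
`(v_i, x_{ij})`, `(x_{ij}, v_j)` and `(v_i, v_j)`. -/
def HArc (n : ℕ) (G : SimpleGraph (Fin n)) : HVert n G → HVert n G → Prop
  | Sum.inl i, Sum.inl j => i < j ∧ G.Adj i j
  | Sum.inl i, Sum.inr e => e.1.1 = i
  | Sum.inr e, Sum.inl j => e.1.2 = j
  | Sum.inr _, Sum.inr _ => False

instance hvertFinite (n : ℕ) (G : SimpleGraph (Fin n)) : Finite (HVert n G) := by
  unfold HVert; infer_instance

def hproj {n : ℕ} {G : SimpleGraph (Fin n)} : HVert n G → Fin n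
  | Sum.inl i => i
  | Sum.inr e => e.1.1

lemma chain'_last_rel {α : Type*} {R : α → α → Prop} :
    ∀ (a : α) (l : List α), (a :: l).Chain' R → ∀ y, (a :: l).getLast? = some y →
      l ≠ [] → ∃ c, R c y := by
  intro a l
  induction l generalizing a with
  | nil => intro _ y _ h; exact absurd rfl h
  | cons b t ih =>
    intro hch y hlast _
    rw [List.Chain', List.isChain_cons_cons] at hch
    rcases eq_or_ne t [] with rfl | ht
    · simp at hlast
      exact ⟨a, by rw [← hlast]; exact hch.1⟩
    · exact ih b hch.2 y (by rwa [List.getLast?_cons_cons] at hlast) ht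


/-- `G` has a vertex cover of size at most `k` iff `H` has a set `X` of at most `k`
vertices such that `H - X` has no transitive arcs. -/
theorem vertexCover_iff_transitiveFree_deletion
    (n : ℕ) (G : SimpleGraph (Fin n)) (k : ℕ) :
    (∃ S : Set (Fin n), S.ncard ≤ k ∧ ∀ u v : Fin n, G.Adj u v → u ∈ S ∨ v ∈ S) ↔
    (∃ X : Set (HVert n G), X.ncard ≤ k ∧
      ∀ a b : HVert n G, ¬ IsTransArc (Del (HArc n G) X) a b) := by
  constructor
  · rintro ⟨S, hScard, hcov⟩
    refine ⟨Sum.inl '' S, ?_, ?_⟩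
    · exact (Set.ncard_image_of_injective S Sum.inl_injective).le.trans hScard
    · rintro a b ⟨⟨ha, hb, harc⟩, l, hnd, hch, hhd, hlast⟩
      match a, b with
      | Sum.inl i, Sum.inl j =>
        rcases hcov i j harc.2 with h | h
        · exact ha ⟨i, h, rfl⟩
        · exact hb ⟨j, h, rfl⟩
      | Sum.inl i, Sum.inr e =>
        -- harc : e.1.1 = i
        cases l with
        | nil => simp at hhd
        | cons x t =>
          simp only [List.head?_cons, Option.some.injEq] at hhd
          obtain rfl := Option.some.inj hhd
          have ht : t ≠ [] := by
            rintro rfl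
            exact Sum.inl_ne_inr (Option.some.inj hlast)
          obtain ⟨c, ⟨⟨_, _, harc'⟩, hne⟩⟩ := chain'_last_rel _ t hch _ hlast ht
          match c, harc' with
          | Sum.inl m, harc' =>
            exact hne ⟨by rw [← harc', harc], rfl⟩
      | Sum.inr e, Sum.inl j =>
        -- harc : e.1.2 = j
        cases l with
        | nil => simp at hhd
        | cons x t =>
          simp only [List.head?_cons, Option.some.injEq] at hhd
          obtain rfl := Option.some.inj hhd
          cases t with
          | nil => exact Sum.inr_ne_inl (Option.some.inj hlast)
          | cons c t' =>
            replace hch := List.isChain_cons_cons.mp hch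
            obtain ⟨⟨_, _, harc'⟩, hne⟩ := hch.1
            match c, harc' with
            | Sum.inl m, harc' =>
              exact hne ⟨rfl, by rw [← harc', harc]⟩
      | Sum.inr e, Sum.inr f => exact harc
  · rintro ⟨X, hXcard, hno⟩
    refine ⟨hproj '' X, le_trans (Set.ncard_image_le X.toFinite) hXcard, ?_⟩
    have key : ∀ u v : Fin n, u < v → G.Adj u v →
        u ∈ hproj '' X ∨ v ∈ hproj '' X := by
      intro u v hlt hadj
      set e : {p : Fin n × Fin n // p.1 < p.2 ∧ G.Adj p.1 p.2} := ⟨(u, v), hlt, hadj⟩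
      by_cases hu : (Sum.inl u : HVert n G) ∈ X
      · exact Or.inl ⟨_, hu, rfl⟩
      by_cases hv : (Sum.inl v : HVert n G) ∈ X
      · exact Or.inr ⟨_, hv, rfl⟩
      by_cases he : (Sum.inr e : HVert n G) ∈ X
      · exact Or.inl ⟨_, he, rfl⟩
      exfalso
      apply hno (Sum.inl u) (Sum.inl v)
      refine ⟨⟨hu, hv, hlt, hadj⟩,
        [Sum.inl u, Sum.inr e, Sum.inl v], ?_, ?_, rfl, rfl⟩
      · show List.Nodup ([Sum.inl u, Sum.inr e, Sum.inl v] : List (Fin n ⊕ {p : Fin n × Fin n // p.1 < p.2 ∧ G.Adj p.1 p.2}))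
        simp
        exact fun h => hlt.ne h
      · refine List.isChain_cons_cons.mpr ⟨⟨⟨hu, he, rfl⟩, fun h => Sum.inr_ne_inl h.2⟩,
          List.isChain_cons_cons.mpr ⟨⟨⟨he, hv, rfl⟩, fun h => Sum.inr_ne_inl h.1⟩,
          List.isChain_singleton _⟩⟩
    intro u v hadj
    rcases lt_trichotomy u v with h | h | h
    · exact key u v h hadj
    · exact absurd h hadj.ne
    · exact (key v u h hadj.symm).symm
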